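/- Let f : ℝ² → [0,∞) be a probability density with respect to the Lebesgue measure λ on ℝ², let loss : [0,∞) → [0,∞) be measurable, and define R(r) = (1/(2π)) ∫₀^{2π} f(r cos θ, r sin θ) dθ. Then the circularized density f_R(v) = R(‖v‖) has the same expected loss as f: ∫_{ℝ²} R(‖v‖) · loss(‖v‖) dλ(v) = ∫_{ℝ²} f(v) · loss(‖v‖) dλ(v). -/

import Mathlib

open MeasureTheory Real

open Set
open scoped ENNReal
section AuxPolar

theorem my_lintegral_polar (g : ℝ × ℝ → ℝ≥0∞) :
    (∫⁻ p, g p) = ∫⁻ p in polarCoord.target, ENNReal.ofReal p.1 * g (polarCoord.symm p) := by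
  set B : ℝ × ℝ → ℝ × ℝ →L[ℝ] ℝ × ℝ := fun p =>
    LinearMap.toContinuousLinearMap (Matrix.toLin (Module.Basis.finTwoProd ℝ) (Module.Basis.finTwoProd ℝ)
      !![cos p.2, -p.1 * sin p.2; sin p.2, p.1 * cos p.2])
  have A : ∀ p ∈ polarCoord.target, HasFDerivWithinAt polarCoord.symm (B p) polarCoord.target p :=
    fun p _ => (hasFDerivAt_polarCoord_symm p).hasFDerivWithinAt
  have B_det : ∀ p, (B p).det = p.1 := by
    intro p
    conv_rhs => rw [← one_mul p.1, ← cos_sq_add_sin_sq p.2]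
    simp only [B, neg_mul, LinearMap.det_toContinuousLinearMap, LinearMap.det_toLin,
      Matrix.det_fin_two_of, sub_neg_eq_add]
    ring
  have hinj : Set.InjOn polarCoord.symm polarCoord.target := by
    have := polarCoord.symm.injOn
    rwa [OpenPartialHomeomorph.symm_source] at this
  calc
    ∫⁻ p, g p = ∫⁻ p in polarCoord.source, g p := by
      rw [← setLIntegral_univ]
      exact (setLIntegral_congr polarCoord_source_ae_eq_univ).symm
    _ = ∫⁻ p in polarCoord.symm '' polarCoord.target, g p := by
      rw [polarCoord.symm_image_target_eq_source]
    _ = ∫⁻ p in polarCoord.target, ENNReal.ofReal |(B p).det| * g (polarCoord.symm p) :=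
      lintegral_image_eq_lintegral_abs_det_fderiv_mul volume
        polarCoord.open_target.measurableSet A hinj g
    _ = ∫⁻ p in polarCoord.target, ENNReal.ofReal p.1 * g (polarCoord.symm p) := by
      refine setLIntegral_congr_fun polarCoord.open_target.measurableSet
        (fun p hp => ?_)
      rw [B_det, abs_of_pos hp.1]


theorem my_euclidean_polar (h : EuclideanSpace ℝ (Fin 2) → ℝ≥0∞) (hm : Measurable h) :
    (∫⁻ v, h v ∂volume) = ∫⁻ r in Ioi (0:ℝ), ∫⁻ θ in Ioo (-π) π,
      ENNReal.ofReal r * h (!₂[r * Real.cos θ, r * Real.sin θ] : EuclideanSpace ℝ (Fin 2)) := by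
  set e : EuclideanSpace ℝ (Fin 2) ≃ᵐ ℝ × ℝ :=
    (MeasurableEquiv.toLp 2 (Fin 2 → ℝ)).symm.trans MeasurableEquiv.finTwoArrow with he_def
  have he : MeasurePreserving e :=
    (volume_preserving_finTwoArrow ℝ).comp (EuclideanSpace.volume_preserving_symm_measurableEquiv_toLp (Fin 2))
  have hesymm : ∀ p : ℝ × ℝ, e.symm p = (!₂[p.1, p.2] : EuclideanSpace ℝ (Fin 2)) := fun p => rfl
  have h1 : (∫⁻ v, h v ∂volume) = ∫⁻ p : ℝ × ℝ, h (e.symm p) :=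
    ((he.symm e).lintegral_comp hm).symm
  have hps : Continuous (fun p : ℝ × ℝ => polarCoord.symm p) := by
    simp only [polarCoord_symm_apply]
    fun_prop
  have hmeas : Measurable fun p : ℝ × ℝ =>
      ENNReal.ofReal p.1 * h (e.symm (polarCoord.symm p)) :=
    (measurable_fst.ennreal_ofReal).mul
      (hm.comp (e.symm.measurable.comp hps.measurable))
  rw [h1, my_lintegral_polar]
  have htarget : polarCoord.target = Ioi (0:ℝ) ×ˢ Ioo (-π) π := rfl
  rw [htarget, Measure.volume_eq_prod, ← Measure.prod_restrict,
    lintegral_prod _ hmeas.aemeasurable]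
  refine lintegral_congr fun r => lintegral_congr fun θ => ?_
  rw [hesymm]
  simp [polarCoord_symm_apply]


end AuxPolar

/-- The circularized density has the same expected loss as the original
density: with `R r = (1/(2π)) ∫₀^{2π} f (r cos θ, r sin θ) dθ`,
`∫_{ℝ²} R ‖v‖ * loss ‖v‖ dλ = ∫_{ℝ²} f v * loss ‖v‖ dλ`. -/
theorem circularized_density_same_expected_loss
    (f : EuclideanSpace ℝ (Fin 2) → ℝ) (hf_meas : Measurable f)
    (hf_nonneg : ∀ v, 0 ≤ f v)
    (hf_density : ∫⁻ v : EuclideanSpace ℝ (Fin 2), ENNReal.ofReal (f v) ∂volume = 1)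
    (loss : ℝ → ℝ) (hloss_meas : Measurable loss)
    (hloss_nonneg : ∀ r, 0 ≤ r → 0 ≤ loss r)
    (R : ℝ → ℝ)
    (hR : ∀ r : ℝ, R r = (1 / (2 * Real.pi)) *
      ∫ θ in (0 : ℝ)..(2 * Real.pi),
        f (!₂[r * Real.cos θ, r * Real.sin θ] : EuclideanSpace ℝ (Fin 2))) :
    ∫⁻ v : EuclideanSpace ℝ (Fin 2), ENNReal.ofReal (R ‖v‖ * loss ‖v‖) ∂volume
      = ∫⁻ v : EuclideanSpace ℝ (Fin 2), ENNReal.ofReal (f v * loss ‖v‖) ∂volume := by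
  have hmP : Measurable fun q : ℝ × ℝ => (!₂[q.1 * Real.cos q.2, q.1 * Real.sin q.2] :
      EuclideanSpace ℝ (Fin 2)) := by
    have : (fun q : ℝ × ℝ => (!₂[q.1 * Real.cos q.2, q.1 * Real.sin q.2] :
        EuclideanSpace ℝ (Fin 2)))
        = (fun p : ℝ × ℝ => (!₂[p.1, p.2] : EuclideanSpace ℝ (Fin 2))) ∘
          (fun q : ℝ × ℝ => (q.1 * Real.cos q.2, q.1 * Real.sin q.2)) := rfl
    rw [this]
    exact (((MeasurableEquiv.toLp 2 (Fin 2 → ℝ)).symm.trans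
      MeasurableEquiv.finTwoArrow).symm.measurable).comp (by fun_prop)
  have hm2 : Measurable fun q : ℝ × ℝ =>
      f !₂[q.1 * Real.cos q.2, q.1 * Real.sin q.2] := hf_meas.comp hmP
  have hmθ : ∀ r : ℝ, Measurable fun θ : ℝ => f !₂[r * Real.cos θ, r * Real.sin θ] :=
    fun r => hm2.comp (measurable_const.prodMk measurable_id)
  -- R is nonneg and measurable
  have hRnn : ∀ r, 0 ≤ R r := by
    intro r
    rw [hR r]
    apply mul_nonneg (by positivity)
    apply intervalIntegral.integral_nonneg (by positivity)
    intro θ _; exact hf_nonneg _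
  have hRmeas : Measurable R := by
    have h1 : Measurable fun r : ℝ =>
        ∫ θ in Ioc (0:ℝ) (2*π), f !₂[r * Real.cos θ, r * Real.sin θ] :=
      (hm2.stronglyMeasurable.integral_prod_right').measurable
    have : R = fun r => (1 / (2*π)) *
        ∫ θ in Ioc (0:ℝ) (2*π), f !₂[r * Real.cos θ, r * Real.sin θ] := by
      funext r
      rw [hR r, ← intervalIntegral.integral_of_le (by positivity)]
    rw [this]
    exact h1.const_mul _
  -- norm of points of EuclideanSpace
  have hnorm : ∀ v : EuclideanSpace ℝ (Fin 2), ‖v‖ = Real.sqrt ((v 0)^2 + (v 1)^2) := by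
    intro v
    rw [EuclideanSpace.norm_eq, Fin.sum_univ_two]
    simp [sq_abs]
  -- the lintegral of f over the circle of radius r
  set I : ℝ → ℝ≥0∞ := fun r => ∫⁻ θ in Ioo (-π) π,
    ENNReal.ofReal (f !₂[r * Real.cos θ, r * Real.sin θ]) with hI_def
  have hImeas : Measurable I := Measurable.lintegral_prod_right (hm2.ennreal_ofReal)
  -- the density written in polar coordinates
  have hden : ∫⁻ r in Ioi (0:ℝ), ENNReal.ofReal r * I r = 1 := by
    rw [← hf_density, my_euclidean_polar _ hf_meas.ennreal_ofReal]
    exact lintegral_congr fun r =>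
      (lintegral_const_mul _ ((hmθ r).ennreal_ofReal)).symm
  -- a.e. finiteness of I on (0, ∞)
  have hfin : ∀ᵐ r ∂(volume.restrict (Ioi (0:ℝ))), I r < ⊤ ∧ r ∈ Ioi (0:ℝ) := by
    have h1 : ∀ᵐ r ∂(volume.restrict (Ioi (0:ℝ))), ENNReal.ofReal r * I r < ⊤ :=
      ae_lt_top (measurable_id.ennreal_ofReal.mul hImeas) (by rw [hden]; exact ENNReal.one_ne_top)
    filter_upwards [h1, ae_restrict_mem measurableSet_Ioi] with r h1 h2
    exact ⟨ENNReal.lt_top_of_mul_ne_top_right h1.ne (ENNReal.ofReal_pos.mpr h2).ne', h2⟩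
  -- key identity relating R and I
  have key : ∀ r : ℝ, 0 < r → I r < ⊤ →
      ENNReal.ofReal (2 * π) * ENNReal.ofReal (R r) = I r := by
    intro r hr hIr
    have hInt : IntegrableOn (fun θ : ℝ => f !₂[r * Real.cos θ, r * Real.sin θ])
        (Ioo (-π) π) := by
      refine ⟨(hmθ r).aestronglyMeasurable, ?_⟩
      rw [HasFiniteIntegral]
      calc ∫⁻ θ in Ioo (-π) π, ‖f !₂[r * Real.cos θ, r * Real.sin θ]‖ₑ
          = ∫⁻ θ in Ioo (-π) π, ENNReal.ofReal (f !₂[r * Real.cos θ, r * Real.sin θ]) := by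
            refine lintegral_congr fun θ => ?_
            rw [Real.enorm_eq_ofReal (hf_nonneg _)]
        _ < ⊤ := hIr
    have hof : ENNReal.ofReal (∫ θ in Ioo (-π) π, f !₂[r * Real.cos θ, r * Real.sin θ]) = I r :=
      ofReal_integral_eq_lintegral_ofReal hInt (Filter.Eventually.of_forall fun θ => hf_nonneg _)
    have hper : Function.Periodic (fun θ : ℝ => f !₂[r * Real.cos θ, r * Real.sin θ]) (2 * π) := by
      intro θ
      simp only [Real.cos_add_two_pi, Real.sin_add_two_pi]
    have hiv : (∫ θ in (0:ℝ)..(2*π), f !₂[r * Real.cos θ, r * Real.sin θ])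
        = ∫ θ in Ioo (-π) π, f !₂[r * Real.cos θ, r * Real.sin θ] := by
      have h0 := hper.intervalIntegral_add_eq 0 (-π)
      have h1 : (0:ℝ) + 2*π = 2*π := by ring
      have h2 : -π + 2*π = π := by ring
      rw [h1, h2] at h0
      rw [h0, intervalIntegral.integral_of_le (by linarith [Real.pi_pos]),
        ← MeasureTheory.integral_Ioc_eq_integral_Ioo]
    have h2R : 2 * π * R r = ∫ θ in Ioo (-π) π, f !₂[r * Real.cos θ, r * Real.sin θ] := by
      rw [hR r, hiv]
      field_simp
    rw [← hof, ← ENNReal.ofReal_mul (by positivity), h2R]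
  -- rewrite both sides in polar coordinates and compare
  have hLmeas : Measurable fun v : EuclideanSpace ℝ (Fin 2) =>
      ENNReal.ofReal (R ‖v‖ * loss ‖v‖) :=
    (((hRmeas.comp measurable_norm).mul (hloss_meas.comp measurable_norm))).ennreal_ofReal
  have hRHSmeas : Measurable fun v : EuclideanSpace ℝ (Fin 2) =>
      ENNReal.ofReal (f v * loss ‖v‖) :=
    ((hf_meas.mul (hloss_meas.comp measurable_norm))).ennreal_ofReal
  rw [my_euclidean_polar _ hLmeas, my_euclidean_polar _ hRHSmeas]
  refine lintegral_congr_ae ?_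
  filter_upwards [hfin] with r hrr
  obtain ⟨hIr, hr⟩ := hrr
  rw [Set.mem_Ioi] at hr
  have hsq : ∀ θ : ℝ, Real.sqrt ((r * Real.cos θ)^2 + (r * Real.sin θ)^2) = r := by
    intro θ
    have h2 : (r * Real.cos θ)^2 + (r * Real.sin θ)^2 = r^2 := by
      have := Real.sin_sq_add_cos_sq θ; nlinarith
    rw [h2, Real.sqrt_sq hr.le]
  simp only [hnorm, Matrix.cons_val_zero, Matrix.cons_val_one, Matrix.head_cons, hsq]
  calc (∫⁻ θ in Ioo (-π) π, ENNReal.ofReal r * ENNReal.ofReal (R r * loss r))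
      = ENNReal.ofReal r * ENNReal.ofReal (R r * loss r) * ENNReal.ofReal (2*π) := by
        rw [setLIntegral_const, Real.volume_Ioo]
        congr 2
        ring
    _ = ENNReal.ofReal r * ENNReal.ofReal (loss r) * (ENNReal.ofReal (2*π) * ENNReal.ofReal (R r)) := by
        rw [ENNReal.ofReal_mul (hRnn r)]
        ring
    _ = ENNReal.ofReal r * ENNReal.ofReal (loss r) * I r := by rw [key r hr hIr]
    _ = ∫⁻ θ in Ioo (-π) π, ENNReal.ofReal r * ENNReal.ofReal (loss r) *
          ENNReal.ofReal (f !₂[r * Real.cos θ, r * Real.sin θ]) := by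
        rw [hI_def]
        exact (lintegral_const_mul _ ((hmθ r).ennreal_ofReal)).symm
    _ = ∫⁻ θ in Ioo (-π) π, ENNReal.ofReal r *
          ENNReal.ofReal (f !₂[r * Real.cos θ, r * Real.sin θ] * loss r) := by
        refine lintegral_congr fun θ => ?_
        rw [ENNReal.ofReal_mul (hf_nonneg _)]
        ring
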